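/- Let Z be a free additive subgroup of ℝ² of rank at least 3 such that every corank-1 subgroup of Z spans ℝ² as a real vector space. Then Z is dense in ℝ². -/
import Mathlib



open Filter Topology

private lemma rank_quot_ker {G : Type} [AddCommGroup G] (f : G →+ ℤ) (hf : ∃ g, f g ≠ 0) :
    Module.rank ℤ (G ⧸ f.ker) = 1 := by
  obtain ⟨g, hg⟩ := hf
  have e := (QuotientAddGroup.quotientKerEquivRange f).toIntLinearEquiv.rank_eq
  rw [e]
  have hnz : NoZeroSMulDivisors ℤ f.range := by
    constructor
    rintro n x h
    rcases eq_or_ne n 0 with rfl | hn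
    · exact Or.inl rfl
    · refine Or.inr ?_
      have : ((n • x : f.range) : ℤ) = 0 := by rw [h]; rfl
      rw [AddSubgroup.coe_zsmul, zsmul_eq_mul] at this
      ext
      rcases mul_eq_zero.mp this with h' | h'
      · exact absurd (by exact_mod_cast h') hn
      · simpa using h'
  refine le_antisymm ?_ ?_
  · calc Module.rank ℤ f.range ≤ Module.rank ℤ ℤ :=
        LinearMap.rank_le_of_injective (f.range.subtype.toIntLinearMap) Subtype.coe_injective
    _ = 1 := Module.rank_self ℤ
  · rw [Cardinal.one_le_iff_pos, rank_pos_iff_exists_ne_zero]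
    exact ⟨⟨f g, ⟨g, rfl⟩⟩, by simpa [Subtype.ext_iff] using hg⟩

private lemma corank_one (Z : AddSubgroup (Fin 2 → ℝ)) (f : ↥Z →+ ℤ) (hf : ∃ z, f z ≠ 0) :
    ∃ H : AddSubgroup (Fin 2 → ℝ), H ≤ Z ∧ Module.rank ℤ (↥Z ⧸ H.addSubgroupOf Z) = 1 ∧
      ∀ x, x ∈ H ↔ ∃ z : ↥Z, f z = 0 ∧ (z : Fin 2 → ℝ) = x := by
  refine ⟨AddSubgroup.map Z.subtype f.ker, ?_, ?_, ?_⟩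
  · rintro x ⟨z, _, rfl⟩; exact z.2
  · have h : (AddSubgroup.map Z.subtype f.ker).addSubgroupOf Z = f.ker :=
      AddSubgroup.comap_map_eq_self_of_injective Z.subtype_injective _
    rw [h]; exact rank_quot_ker f hf
  · intro x
    constructor
    · rintro ⟨z, hz, rfl⟩; exact ⟨z, hz, rfl⟩
    · rintro ⟨z, hz, rfl⟩; exact ⟨z, hz, rfl⟩


private lemma exists_line (Z : AddSubgroup (Fin 2 → ℝ))
    (h : ∀ ε : ℝ, 0 < ε → ∃ x ∈ Z, x ≠ 0 ∧ ‖x‖ < ε) :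
    ∃ u : Fin 2 → ℝ, u ≠ 0 ∧ ∀ t : ℝ, t • u ∈ closure (Z : Set (Fin 2 → ℝ)) := by
  have h' : ∀ n : ℕ, ∃ x : Fin 2 → ℝ, x ∈ Z ∧ x ≠ 0 ∧ ‖x‖ < 1 / (n + 1) := by
    intro n
    obtain ⟨x, hxZ, hx0, hxn⟩ := h (1 / (n + 1)) (by positivity)
    exact ⟨x, hxZ, hx0, hxn⟩
  choose x hxZ hx0 hxlt using h'
  have hnorm : ∀ n, (0:ℝ) < ‖x n‖ := fun n => norm_pos_iff.mpr (hx0 n)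
  have humem : ∀ n, ‖x n‖⁻¹ • x n ∈ Metric.sphere (0 : Fin 2 → ℝ) 1 := fun n => by
    simp [norm_smul, abs_of_pos (inv_pos.mpr (hnorm n)), inv_mul_cancel₀ (hnorm n).ne']
  obtain ⟨v, hv, ψ, hψ, hconv⟩ := (isCompact_sphere (0 : Fin 2 → ℝ) 1).tendsto_subseq humem
  have hv1 : ‖v‖ = 1 := by simpa using hv
  refine ⟨v, fun h0 => by simp [h0] at hv1, fun t => ?_⟩
  set a : ℕ → ℝ := fun k => ‖x (ψ k)‖ with ha
  have ha0 : ∀ k, 0 < a k := fun k => hnorm (ψ k)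
  set c : ℕ → ℝ := fun k => (⌊t / a k⌋ : ℝ) * a k with hc
  have hc_le : ∀ k, c k ≤ t := fun k => by
    rw [hc]
    calc (⌊t / a k⌋ : ℝ) * a k ≤ (t / a k) * a k :=
      mul_le_mul_of_nonneg_right (Int.floor_le _) (ha0 k).le
    _ = t := div_mul_cancel₀ _ (ha0 k).ne'
  have hc_gt : ∀ k, t - a k < c k := fun k => by
    have h1 : t / a k < ⌊t / a k⌋ + 1 := Int.lt_floor_add_one _
    have := (div_lt_iff₀ (ha0 k)).mp h1
    rw [hc]; nlinarith [ha0 k]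
  have haz : Tendsto a atTop (𝓝 0) := by
    apply squeeze_zero (fun k => (ha0 k).le) (fun k => (hxlt (ψ k)).le.trans ?_)
    · exact tendsto_one_div_add_atTop_nhds_zero_nat
    · have : (k : ℝ) ≤ (ψ k : ℝ) := by exact_mod_cast hψ.le_apply
      apply one_div_le_one_div_of_le (by positivity)
      linarith
  have hct : Tendsto c atTop (𝓝 t) := by
    refine tendsto_of_tendsto_of_tendsto_of_le_of_le ?_ tendsto_const_nhds
      (fun k => (hc_gt k).le) hc_le
    simpa using tendsto_const_nhds.sub haz
  have htend : Tendsto (fun k => c k • (‖x (ψ k)‖⁻¹ • x (ψ k))) atTop (𝓝 (t • v)) :=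
    hct.smul hconv
  refine mem_closure_of_tendsto htend (Eventually.of_forall fun k => ?_)
  have heq : c k • (‖x (ψ k)‖⁻¹ • x (ψ k)) = (⌊t / a k⌋ : ℤ) • x (ψ k) := by
    rw [smul_smul, ← Int.cast_smul_eq_zsmul ℝ]
    congr 1
    show (⌊t / a k⌋ : ℝ) * a k * (a k)⁻¹ = _
    rw [mul_assoc, mul_inv_cancel₀ (ha0 k).ne', mul_one]
  rw [heq]
  exact AddSubgroup.zsmul_mem Z (hxZ (ψ k)) _

/-- If `Z` is a free additive subgroup of `ℝ²` of rank at least `3` such that every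
corank-`1` subgroup of `Z` spans `ℝ²` as a real vector space, then `Z` is dense in `ℝ²`. -/
theorem stmt_0 (Z : AddSubgroup (Fin 2 → ℝ))
    (hfree : Module.Free ℤ Z)
    (hrank : 3 ≤ Module.rank ℤ Z)
    (hcorank : ∀ H : AddSubgroup (Fin 2 → ℝ), H ≤ Z →
      Module.rank ℤ (Z ⧸ H.addSubgroupOf Z) = 1 →
      Submodule.span ℝ (H : Set (Fin 2 → ℝ)) = ⊤) :
    Dense (Z : Set (Fin 2 → ℝ)) := by
  classical
  haveI := hfree
  set b := Module.Free.chooseBasis ℤ ↥Z with hb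
  have hne : Nonempty (Module.Free.ChooseBasisIndex ℤ ↥Z) := by
    by_contra hempty
    rw [not_nonempty_iff] at hempty
    have hr := Module.Free.rank_eq_card_chooseBasisIndex ℤ ↥Z
    rw [Cardinal.mk_eq_zero] at hr
    rw [hr] at hrank
    norm_num at hrank
  obtain ⟨i⟩ := hne
  have hf₀ : ∃ z : ↥Z, (b.coord i).toAddMonoidHom z ≠ 0 :=
    ⟨b i, by simp [Module.Basis.coord_apply]⟩
  obtain ⟨H₀, hH₀le, hH₀rk, _⟩ := corank_one Z (b.coord i).toAddMonoidHom hf₀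
  have hspan₀ := hcorank H₀ hH₀le hH₀rk
  set Zm : Submodule ℤ (Fin 2 → ℝ) := AddSubgroup.toIntSubmodule Z with hZm
  by_cases hd : DiscreteTopology ↥Zm
  · -- discrete case: contradiction with rank ≥ 3
    exfalso
    set F : Submodule ℝ (Fin 2 → ℝ) := Submodule.span ℝ (Zm : Set (Fin 2 → ℝ)) with hF
    set g : ↥F →ₗ[ℤ] (Fin 2 → ℝ) := F.subtype.restrictScalars ℤ with hgdef
    set L₀ : Submodule ℤ ↥F := Zm.comap g with hL₀
    have hginj : Function.Injective g := Submodule.injective_subtype F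
    have hle : Zm ≤ LinearMap.range g := by
      intro z hz
      exact ⟨⟨z, Submodule.subset_span hz⟩, rfl⟩
    have hmap : L₀.map g = Zm := Submodule.map_comap_eq_self hle
    haveI hdisc : DiscreteTopology ↥L₀ := by
      refine DiscreteTopology.preimage_of_continuous_injective
        (Zm : Set (Fin 2 → ℝ)) ?_ (Submodule.injective_subtype F)
      exact LinearMap.continuous_of_finiteDimensional F.subtype
    have h_img : (F.subtype) '' L₀ = Zm := by
      rw [← LinearMap.coe_restrictScalars ℤ F.subtype, ← Submodule.map_coe (F.subtype.restrictScalars ℤ),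
        Submodule.map_comap_eq_self hle]
    haveI hlat : IsZLattice ℝ L₀ := ⟨by
      rw [← (Submodule.map_injective_of_injective (Submodule.injective_subtype F)).eq_iff,
        Submodule.map_span, Submodule.map_top, Submodule.range_subtype, h_img]⟩
    haveI : Module.Finite ℤ ↥L₀ := ZLattice.module_finite ℝ L₀
    have e : ↥L₀ ≃ₗ[ℤ] ↥Zm :=
      (Submodule.equivMapOfInjective g hginj L₀).trans (LinearEquiv.ofEq _ _ hmap)
    have h1 : Module.rank ℤ ↥Z = Module.rank ℤ ↥Zm := by
      refine LinearEquiv.rank_eq (AddEquiv.toIntLinearEquiv ?_)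
      exact { toFun := fun z => ⟨z.1, z.2⟩, invFun := fun z => ⟨z.1, z.2⟩,
              map_add' := fun _ _ => rfl, left_inv := fun _ => rfl, right_inv := fun _ => rfl }
    have h2 := e.rank_eq
    have h3 : (Module.finrank ℤ ↥L₀ : Cardinal) = Module.rank ℤ ↥L₀ :=
      Module.finrank_eq_rank ℤ ↥L₀
    have h4 : Module.finrank ℤ ↥L₀ = Module.finrank ℝ ↥F := ZLattice.rank ℝ L₀
    have h5 : Module.finrank ℝ ↥F ≤ 2 := by
      have hfl := Submodule.finrank_le F
      rwa [Module.finrank_fin_fun] at hfl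
    have h6 : (3 : Cardinal) ≤ (Module.finrank ℤ ↥L₀ : Cardinal) := by
      rw [h3, h2, ← h1]; exact hrank
    have h7 : (3 : ℕ) ≤ Module.finrank ℤ ↥L₀ := by exact_mod_cast h6
    omega
  · -- non-discrete case
    have hsmall : ∀ ε : ℝ, 0 < ε → ∃ x ∈ Z, x ≠ 0 ∧ ‖x‖ < ε := by
      by_contra hc
      push_neg at hc
      obtain ⟨ε, hε, hfa⟩ := hc
      apply hd
      rw [discreteTopology_iff_isOpen_singleton_zero]
      have hset : ({0} : Set ↥Zm) = (Subtype.val) ⁻¹' Metric.ball (0 : Fin 2 → ℝ) ε := by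
        ext z
        simp only [Set.mem_singleton_iff, Set.mem_preimage, Metric.mem_ball, dist_zero_right]
        constructor
        · rintro rfl; simpa using hε
        · intro hz
          by_contra h0
          have hz0 : (z : Fin 2 → ℝ) ≠ 0 := fun hh => h0 (Subtype.ext hh)
          exact absurd hz (not_lt.mpr (hfa z z.2 hz0))
      rw [hset]
      exact Metric.isOpen_ball.preimage continuous_subtype_val
    obtain ⟨u, hu0, huline⟩ := exists_line Z hsmall
    set V : Submodule ℝ (Fin 2 → ℝ) := Submodule.span ℝ {u} with hV
    have hVC : (V : Set (Fin 2 → ℝ)) ⊆ closure (Z : Set (Fin 2 → ℝ)) := by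
      intro y hy
      obtain ⟨t, rfl⟩ := Submodule.mem_span_singleton.mp hy
      exact huline t
    have hfr : Module.finrank ℝ ((Fin 2 → ℝ) ⧸ V) = 1 := by
      have h1 := Submodule.finrank_quotient_add_finrank V
      rw [finrank_span_singleton hu0, Module.finrank_fin_fun] at h1
      omega
    obtain ⟨ψ⟩ : Nonempty (((Fin 2 → ℝ) ⧸ V) ≃ₗ[ℝ] ℝ) := by
      apply FiniteDimensional.nonempty_linearEquiv_of_finrank_eq
      rw [hfr, Module.finrank_self]
    set φ : (Fin 2 → ℝ) →ₗ[ℝ] ℝ := ψ.toLinearMap ∘ₗ V.mkQ with hφ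
    have hker : LinearMap.ker φ = V := by
      rw [hφ, LinearMap.ker_comp, LinearEquiv.ker, Submodule.comap_bot, Submodule.ker_mkQ]
    obtain ⟨w, hw⟩ : ∃ w : Fin 2 → ℝ, φ w = 1 := by
      obtain ⟨q, hq⟩ := V.mkQ_surjective (ψ.symm 1)
      exact ⟨q, by simp [hφ, hq]⟩
    have hmemker : ∀ y : Fin 2 → ℝ, y - φ y • w ∈ V := fun y => by
      rw [← hker, LinearMap.mem_ker, map_sub, map_smul, hw, smul_eq_mul, mul_one, sub_self]
    have hmemC : ∀ y : Fin 2 → ℝ,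
        y ∈ Z.topologicalClosure ↔ y ∈ closure (Z : Set (Fin 2 → ℝ)) := fun y => by
      rw [← SetLike.mem_coe, AddSubgroup.topologicalClosure_coe]
    have hzw : ∀ z ∈ Z, φ z • w ∈ closure (Z : Set (Fin 2 → ℝ)) := by
      intro z hz
      have h1 : z - φ z • w ∈ closure (Z : Set (Fin 2 → ℝ)) := hVC (hmemker z)
      have h2 : z ∈ closure (Z : Set (Fin 2 → ℝ)) := subset_closure hz
      have h3 : z - (z - φ z • w) ∈ Z.topologicalClosure :=
        sub_mem ((hmemC _).2 h2) ((hmemC _).2 h1)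
      have h4 := (hmemC _).1 h3
      simpa using h4
    set S : AddSubgroup ℝ := AddSubgroup.map φ.toAddMonoidHom Z with hSdef
    rcases S.dense_or_cyclic with hdense | ⟨a, ha⟩
    · -- dense projection: Z is dense
      set T : AddSubgroup ℝ :=
        Z.topologicalClosure.comap (LinearMap.toSpanSingleton ℝ (Fin 2 → ℝ) w).toAddMonoidHom with hT
      have hTclosed : IsClosed (T : Set ℝ) := by
        have heq : (T : Set ℝ) = (fun s : ℝ => s • w) ⁻¹' (Z.topologicalClosure : Set (Fin 2 → ℝ)) := rfl
        rw [heq]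
        exact (Z.isClosed_topologicalClosure).preimage (continuous_id.smul continuous_const)
      have hST : (S : Set ℝ) ⊆ (T : Set ℝ) := by
        rintro s ⟨z, hz, rfl⟩
        have : φ z • w ∈ Z.topologicalClosure := (hmemC _).2 (hzw z hz)
        exact this
      have hcl : ∀ s : ℝ, s • w ∈ closure (Z : Set (Fin 2 → ℝ)) := by
        intro s
        have h1 : s ∈ closure (S : Set ℝ) := hdense s
        have h2 : s ∈ (T : Set ℝ) := closure_minimal hST hTclosed h1
        exact (hmemC _).1 h2
      rw [dense_iff_closure_eq]
      apply Set.eq_univ_of_forall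
      intro y
      have h1 : y - φ y • w ∈ closure (Z : Set (Fin 2 → ℝ)) := hVC (hmemker y)
      have h2 := hcl (φ y)
      have h3 : (y - φ y • w) + φ y • w ∈ Z.topologicalClosure :=
        add_mem ((hmemC _).2 h1) ((hmemC _).2 h2)
      have h4 := (hmemC _).1 h3
      simpa using h4
    · -- cyclic projection: contradiction
      exfalso
      by_cases hZφ : ∀ z ∈ Z, φ z = 0
      · have hsub : Submodule.span ℝ (H₀ : Set (Fin 2 → ℝ)) ≤ LinearMap.ker φ := by
          rw [Submodule.span_le]
          intro y hy
          exact LinearMap.mem_ker.mpr (hZφ y (hH₀le hy))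
        rw [hspan₀, top_le_iff] at hsub
        have hw0 : φ w = 0 := LinearMap.mem_ker.mp (hsub ▸ Submodule.mem_top)
        rw [hw] at hw0
        exact one_ne_zero hw0
      · push_neg at hZφ
        obtain ⟨z₀, hz₀Z, hz₀⟩ := hZφ
        have hmemS : ∀ z : ↥Z, ∃ n : ℤ, n • a = φ z := by
          intro z
          have h1 : φ z ∈ S := ⟨z, z.2, rfl⟩
          rwa [ha, AddSubgroup.mem_closure_singleton] at h1
        have ha0 : a ≠ 0 := by
          rintro rfl
          obtain ⟨n, hn⟩ := hmemS ⟨z₀, hz₀Z⟩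
          simp only [smul_zero] at hn
          exact hz₀ hn.symm
        choose g hg using hmemS
        have hgadd : ∀ y z : ↥Z, g (y + z) = g y + g z := by
          intro y z
          have e1 := hg (y + z)
          have e2 := hg y
          have e3 := hg z
          have h1 : (g (y + z) : ℤ) • a = ((g y + g z : ℤ)) • a := by
            rw [e1, add_zsmul, e2, e3, AddSubgroup.coe_add, map_add]
          have h1' : ((g (y + z) : ℤ) : ℝ) * a = ((g y + g z : ℤ) : ℝ) * a := by
            rw [← zsmul_eq_mul, ← zsmul_eq_mul]; exact_mod_cast h1
          have h2 : ((g (y + z) : ℤ) : ℝ) = ((g y + g z : ℤ) : ℝ) :=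
            mul_right_cancel₀ ha0 h1'
          exact_mod_cast h2
        set f : ↥Z →+ ℤ := AddMonoidHom.mk' g hgadd with hfdef
        have hfnz : ∃ z : ↥Z, f z ≠ 0 := by
          refine ⟨⟨z₀, hz₀Z⟩, fun h0 => hz₀ ?_⟩
          have hx := hg ⟨z₀, hz₀Z⟩
          rw [show f ⟨z₀, hz₀Z⟩ = g ⟨z₀, hz₀Z⟩ from rfl] at h0
          rw [h0] at hx
          simpa using hx.symm
        obtain ⟨H, hHle, hHrk, hHmem⟩ := corank_one Z f hfnz
        have hspan := hcorank H hHle hHrk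
        have hsub : Submodule.span ℝ (H : Set (Fin 2 → ℝ)) ≤ LinearMap.ker φ := by
          rw [Submodule.span_le]
          intro y hy
          obtain ⟨z, hz, rfl⟩ := (hHmem y).1 hy
          have hx := hg z
          rw [show f z = g z from rfl] at hz
          rw [hz] at hx
          exact LinearMap.mem_ker.mpr (by simpa using hx.symm)
        rw [hspan, top_le_iff] at hsub
        have hw0 : φ w = 0 := LinearMap.mem_ker.mp (hsub ▸ Submodule.mem_top)
        rw [hw] at hw0
        exact one_ne_zero hw0
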